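/- arXiv:1510.05942 — 7 statements merged into one kernel-verified Lean document; each statement's English description precedes it below -/
import Mathlib

section
/- Let g : E_k^n → E_k be a function with decrease d(g) ≤ D, and let C = (α_1, ..., α_r) be a chain in E_k^n. Then the sequence of (n+1)-tuples (g(α_1), α_1), ..., (g(α_r), α_r) in E_k^{n+1} can be partitioned into at most D + 1 contiguous blocks, each of which is a chain in E_k^{n+1}. -/
/-- A chain in `E_k^n`: pairwise distinct tuples increasing coordinatewise,
    i.e. strictly increasing in the coordinatewise (product) order. -/
def IsChainE {n k : ℕ} (C : List (Fin n → Fin k)) : Prop :=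
  C.Chain' (· < ·)

/-- The decrease `d_C(f)` of `f` over a chain `C`: number of consecutive
    pairs on which `f` strictly decreases. -/
def decC {n k : ℕ} (f : (Fin n → Fin k) → Fin k) (C : List (Fin n → Fin k)) : ℕ :=
  (C.zip C.tail).countP (fun p => decide (f p.2 < f p.1))

/-- The decrease `d(f)` of `f`: maximum of `d_C(f)` over all chains `C`. -/
noncomputable def dF {n k : ℕ} (f : (Fin n → Fin k) → Fin k) : ℕ :=
  sSup {m : ℕ | ∃ C : List (Fin n → Fin k), IsChainE C ∧ decC f C = m}

/-- Splitting lemma: any nonempty list splits into blocks, each a chain for `r`,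
with the number of blocks bounded by the number of "bad" consecutive pairs plus 1. -/
theorem split_lemma {Y : Type*} (r : Y → Y → Prop) [DecidableRel r] :
    ∀ (l : List Y) (a : Y), ∃ (B : List Y) (L : List (List Y)),
      ((B :: L).flatten = a :: l) ∧ B.head? = some a ∧
      (B :: L).length ≤ ((a :: l).zip l).countP (fun p => !decide (r p.1 p.2)) + 1 ∧
      ∀ X ∈ B :: L, X.Chain' r := by
  intro l
  induction l with
  | nil =>
    intro a
    exact ⟨[a], [], rfl, rfl, by simp, by simp [List.Chain', List.isChain_singleton]⟩
  | cons b t ih =>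
    intro a
    obtain ⟨B, L, hfl, hhd, hlen, hch⟩ := ih b
    by_cases hr : r a b
    · refine ⟨a :: B, L, by simpa using hfl, rfl, ?_, ?_⟩
      · simpa [hr, List.countP_cons] using hlen
      · intro X hX
        rcases List.mem_cons.1 hX with h | h
        · subst h
          exact (hch B (by simp)).cons (by simp [hhd, hr])
        · exact hch X (by simp [h])
    · refine ⟨[a], B :: L, by simpa using hfl, rfl, ?_, ?_⟩
      · have hpb : List.countP (fun p : Y × Y => !decide (r p.1 p.2)) ((a, b) :: (b :: t).zip t)
            = List.countP (fun p : Y × Y => !decide (r p.1 p.2)) ((b :: t).zip t) + 1 := by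
          rw [List.countP_cons]; simp [hr]
        rw [List.zip_cons_cons, hpb]
        simp only [List.length_cons] at hlen ⊢
        omega
      · intro X hX
        rcases List.mem_cons.1 hX with h | h
        · subst h; exact List.isChain_singleton a
        · exact hch X h

theorem zip_of_chain' {Y : Type*} {r : Y → Y → Prop} :
    ∀ {l : List Y}, l.Chain' r → ∀ p ∈ l.zip l.tail, r p.1 p.2 := by
  intro l
  induction l with
  | nil => intro _ p hp; simp at hp
  | cons a t ih =>
    intro h p hp
    cases t with
    | nil => simp at hp
    | cons b s =>
      simp only [List.Chain', List.isChain_cons_cons] at h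
      simp only [List.tail_cons, List.zip_cons_cons, List.mem_cons] at hp
      rcases hp with h1 | h1
      · subst h1; exact h.1
      · exact ih h.2 p h1

instance decLtPi {n k : ℕ} : DecidableRel ((· < ·) : (Fin n → Fin k) → (Fin n → Fin k) → Prop) :=
  fun a b => decidable_of_iff ((∀ i, a i ≤ b i) ∧ ¬ ∀ i, a i = b i) (by
    change _ ↔ a < b
    rw [lt_iff_le_and_ne, Pi.le_def, Ne, funext_iff])

/-- If `d(g) ≤ D` and `C` is a chain in `E_k^n`, then the lifted sequence
    `(g(α), α)` in `E_k^{n+1}` splits into at most `D + 1` contiguous blocks,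
    each a chain in `E_k^{n+1}`. -/
theorem stmt6 {n k D : ℕ} (g : (Fin n → Fin k) → Fin k) (hg : dF g ≤ D)
    (C : List (Fin n → Fin k)) (hC : IsChainE C) :
    ∃ L : List (List (Fin (n + 1) → Fin k)),
      L.flatten = C.map (fun α => Fin.cons (g α) α) ∧
      L.length ≤ D + 1 ∧ ∀ B ∈ L, IsChainE B := by
  -- first: decC g C ≤ dF g ≤ D
  have hbdd : BddAbove {m : ℕ | ∃ C' : List (Fin n → Fin k), IsChainE C' ∧ decC g C' = m} := by
    refine ⟨Fintype.card (Fin n → Fin k), ?_⟩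
    rintro m ⟨C', hC', rfl⟩
    have hnd : C'.Nodup := ((List.isChain_iff_pairwise.1 hC').imp ne_of_lt)
    calc decC g C' ≤ (C'.zip C'.tail).length := List.countP_le_length
      _ ≤ C'.length := by rw [List.length_zip]; exact min_le_left _ _
      _ ≤ Fintype.card (Fin n → Fin k) := hnd.length_le_card
  have hdec : decC g C ≤ D :=
    le_trans (le_csSup hbdd ⟨C, hC, rfl⟩) hg
  -- relation on the base
  set r : (Fin n → Fin k) → (Fin n → Fin k) → Prop :=
    fun α β => (Fin.cons (g α) α : Fin (n + 1) → Fin k) < Fin.cons (g β) β with hrdef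
  have hrdec : DecidableRel r := fun a b => decLtPi _ _
  cases C with
  | nil => exact ⟨[], by simp, by simp, by simp⟩
  | cons a t =>
    obtain ⟨B, L, hfl, _, hlen, hch⟩ := @split_lemma _ r hrdec t a
    refine ⟨(B :: L).map (List.map (fun α => Fin.cons (g α) α)), ?_, ?_, ?_⟩
    · rw [← List.map_flatten, hfl]
    · -- length bound
      have hcount : ((a :: t).zip t).countP (fun p => !decide (r p.1 p.2))
          ≤ decC g (a :: t) := by
        apply List.countP_mono_left
        intro p hp h
        have hlt : p.1 < p.2 := zip_of_chain' hC p (by simpa using hp)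
        simp only [Bool.not_eq_true', decide_eq_false_iff_not, hrdef] at h
        simp only [decide_eq_true_eq]
        -- need g p.2 < g p.1
        by_contra hle
        push_neg at hle
        apply h
        constructor
        · intro i
          refine Fin.cases ?_ ?_ i
          · simpa using hle
          · intro j; simpa using le_of_lt hlt j
        · intro heq
          have h2 : p.2 ≤ p.1 := fun j => by simpa using heq j.succ
          exact absurd h2 hlt.not_ge
      calc ((B :: L).map _).length = (B :: L).length := List.length_map _
        _ ≤ _ + 1 := hlen
        _ ≤ decC g (a :: t) + 1 := by omega
        _ ≤ D + 1 := by omega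
    · intro X hX
      simp only [List.mem_map] at hX
      obtain ⟨X0, hX0, rfl⟩ := hX
      show List.Chain' (· < ·) _
      simp only [List.Chain', List.isChain_map]
      exact hch X0 hX0
end

section
/- Let ω : E_k^t → E_k be arbitrary, let h_1, ..., h_t : E_k^n → E_k be monotone, and let g : E_k^{n+1} → E_k be monotone. Define f(x) = g(ω(h_1(x), ..., h_t(x)), x). Then d(f) ≤ d(ω). -/
lemma decC_cons2 {n k : ℕ} (f : (Fin n → Fin k) → Fin k) (u v : Fin n → Fin k)
    (r : List (Fin n → Fin k)) :
    decC f (u :: v :: r) = (if f v < f u then 1 else 0) + decC f (v :: r) := by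
  simp only [decC, List.tail_cons, List.zip_cons_cons, List.countP_cons]
  split <;> simp_all <;> omega

lemma decC_le_card {n k : ℕ} (f : (Fin n → Fin k) → Fin k) (C : List (Fin n → Fin k))
    (hC : C.Chain' (· < ·)) : decC f C ≤ Fintype.card (Fin n → Fin k) := by
  have h1 : decC f C ≤ C.length := by
    calc decC f C ≤ (C.zip C.tail).length := List.countP_le_length
    _ ≤ C.length := by simp [List.length_zip]
  have hnd : C.Nodup := ((List.isChain_iff_pairwise.mp hC).imp fun h => ne_of_lt h)
  exact h1.trans (hnd.length_le_card)

/-- If `h₁, ..., h_t` and `g` are monotone, then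
    `f(x) = g(ω(h₁(x),...,h_t(x)), x)` satisfies `d(f) ≤ d(ω)`. -/
theorem stmt7 {n t k : ℕ} (ω : (Fin t → Fin k) → Fin k)
    (h : Fin t → (Fin n → Fin k) → Fin k) (hh : ∀ i, Monotone (h i))
    (g : (Fin (n + 1) → Fin k) → Fin k) (hg : Monotone g) :
    dF (fun x => g (Fin.cons (ω (fun i => h i x)) x)) ≤ dF ω := by
  classical
  set f : (Fin n → Fin k) → Fin k := fun x => g (Fin.cons (ω (fun i => h i x)) x) with hfdef
  set H : (Fin n → Fin k) → (Fin t → Fin k) := fun x i => h i x with hHdef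
  have Hle : ∀ x y : Fin n → Fin k, x ≤ y → H x ≤ H y := fun x y hxy i => hh i hxy
  have key : ∀ x y : Fin n → Fin k, x ≤ y → f y < f x → ω (H y) < ω (H x) := by
    intro x y hxy hfy
    by_contra hc
    push_neg at hc
    have hle : f x ≤ f y := by
      apply hg
      intro j
      refine Fin.cases ?_ ?_ j
      · simpa [hHdef] using hc
      · intro j'; simpa using hxy j'
    exact absurd hfy (not_lt.mpr hle)
  have main : ∀ C : List (Fin n → Fin k), C.Chain' (· < ·) →
      ∃ D : List (Fin t → Fin k), D.Chain' (· < ·) ∧ decC f C ≤ decC ω D ∧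
        ∀ x, C.head? = some x → D.head? = some (H x) := by
    intro C
    induction C with
    | nil => intro _; exact ⟨[], List.isChain_nil, by simp [decC], by simp⟩
    | cons x C ih =>
      intro hC
      match C, hC with
      | [], _ => exact ⟨[H x], List.isChain_singleton _, by simp [decC], by simp⟩
      | a :: C', hC =>
        have hxa : x < a := (List.isChain_cons_cons.mp hC).1
        obtain ⟨D, hDchain, hDle, hDhead⟩ := ih (List.isChain_cons_cons.mp hC).2
        have hDh := hDhead a rfl
        obtain ⟨D', rfl⟩ : ∃ D', D = H a :: D' := by
          cases D with
          | nil => simp at hDh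
          | cons d D' =>
            simp only [List.head?_cons, Option.some.injEq] at hDh
            exact ⟨D', by rw [hDh]⟩
        by_cases heq : H x = H a
        · refine ⟨H a :: D', hDchain, ?_, fun y hy => by
            simp only [List.head?_cons, Option.some.injEq] at hy ⊢; rw [← hy, heq]⟩
          rw [decC_cons2]
          have hnd : ¬ f a < f x := by
            intro hd
            have := key x a hxa.le hd
            rw [heq] at this
            exact lt_irrefl _ this
          simpa [hnd] using hDle
        · have hlt : H x < H a := lt_of_le_of_ne (Hle x a hxa.le) heq
          refine ⟨H x :: H a :: D', List.isChain_cons_cons.mpr ⟨hlt, hDchain⟩, ?_, by simp⟩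
          rw [decC_cons2, decC_cons2]
          by_cases hdec : f a < f x
          · have hw := key x a hxa.le hdec
            simp only [hdec, if_true, hw]
            omega
          · simp only [hdec, if_false]
            split <;> omega
  have hbdd : BddAbove {m : ℕ | ∃ C : List (Fin t → Fin k), IsChainE C ∧ decC ω C = m} := by
    refine ⟨Fintype.card (Fin t → Fin k), ?_⟩
    rintro m ⟨C, hC, rfl⟩
    exact decC_le_card ω C hC
  have hne : Set.Nonempty {m : ℕ | ∃ C : List (Fin n → Fin k), IsChainE C ∧ decC f C = m} :=
    ⟨0, [], List.isChain_nil, by simp [decC]⟩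
  refine csSup_le hne ?_
  rintro m ⟨C, hC, rfl⟩
  obtain ⟨D, hDchain, hDle, -⟩ := main C hC
  exact hDle.trans (le_csSup hbdd ⟨D, hDchain, rfl⟩)
end

section
/- For every n ≥ 1 and k ≥ 2, every function f : E_k^n → E_k satisfies d(f) ≤ (k-2)n + ⌈n/k⌉. -/
lemma descent_aux (k : ℕ) :
    ∀ (t : List (Fin k)) (a : Fin k),
      k * ((a :: t).zip t).countP (fun p => decide (p.2 < p.1)) ≤ (k - 1) * t.length + a.val := by
  intro t
  induction t with
  | nil => intro a; simp
  | cons b s ih =>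
    intro a
    have hIH := ih b
    have hb := b.isLt
    have ha := a.isLt
    rw [List.zip_cons_cons, List.countP_cons, List.length_cons]
    set X := ((b :: s).zip s).countP (fun p => decide (p.2 < p.1)) with hX
    rw [mul_add, Nat.mul_succ]
    set M := k * X with hM
    set L := (k - 1) * s.length with hL
    by_cases h : (b : Fin k) < a
    · have hba : b.val < a.val := h
      rw [if_pos (decide_eq_true h), mul_one]
      omega
    · have hba : ¬ b.val < a.val := h
      rw [if_neg (by simpa using h), mul_zero]
      omega

lemma descent_bound (k : ℕ) (v : List (Fin k)) :
    k * (v.zip v.tail).countP (fun p => decide (p.2 < p.1)) ≤ (k - 1) * v.length := by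
  cases v with
  | nil => simp
  | cons a t =>
    have := descent_aux k t a
    have ha : a.val ≤ k - 1 := by have := a.isLt; omega
    calc k * ((a :: t).zip (a :: t).tail).countP (fun p => decide (p.2 < p.1))
        ≤ (k - 1) * t.length + a.val := this
      _ ≤ (k - 1) * t.length + (k - 1) := by omega
      _ = (k - 1) * (a :: t).length := by rw [List.length_cons, Nat.mul_succ]

lemma chain_length_bound {n k : ℕ} (C : List (Fin n → Fin k)) (hC : C.Chain' (· < ·)) :
    C.length ≤ (k - 1) * n + 1 := by
  classical
  set w : (Fin n → Fin k) → ℕ := fun α => ∑ i, (α i).val with hw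
  have hmono : ∀ α β : Fin n → Fin k, α < β → w α < w β := by
    intro α β hαβ
    rw [Pi.lt_def] at hαβ
    obtain ⟨hle, i, hi⟩ := hαβ
    apply Finset.sum_lt_sum
    · intro j _; exact hle j
    · exact ⟨i, Finset.mem_univ i, hi⟩
  have hchain : (C.map w).Chain' (· < ·) := by
    unfold List.Chain' at hC ⊢
    rw [List.isChain_map]
    exact hC.imp (fun {a b} => hmono a b)
  have hpw : (C.map w).Pairwise (· < ·) := List.isChain_iff_pairwise.mp hchain
  have hnd : (C.map w).Nodup := hpw.imp Nat.ne_of_lt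
  have hsub : (C.map w).toFinset ⊆ Finset.range ((k - 1) * n + 1) := by
    intro x hx
    rw [List.mem_toFinset] at hx
    obtain ⟨α, _, rfl⟩ := List.mem_map.mp hx
    rw [Finset.mem_range, Nat.lt_succ_iff]
    calc w α ≤ ∑ _i : Fin n, (k - 1) := by
          apply Finset.sum_le_sum
          intro i _
          have := (α i).isLt
          omega
      _ = n * (k - 1) := by simp [Finset.sum_const, mul_comm]
      _ = (k - 1) * n := mul_comm _ _
  calc C.length = (C.map w).length := (List.length_map _).symm
    _ = (C.map w).toFinset.card := (List.toFinset_card_of_nodup hnd).symm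
    _ ≤ (Finset.range ((k - 1) * n + 1)).card := Finset.card_le_card hsub
    _ = (k - 1) * n + 1 := Finset.card_range _

lemma decC_eq {n k : ℕ} (f : (Fin n → Fin k) → Fin k) (C : List (Fin n → Fin k)) :
    decC f C = ((C.map f).zip (C.map f).tail).countP (fun p => decide (p.2 < p.1)) := by
  rw [decC]
  rw [← List.map_tail, List.zip_map, List.countP_map]
  rfl

/-- For `n ≥ 1`, `k ≥ 2`, every `f : E_k^n → E_k` satisfies
    `d(f) ≤ (k-2)n + ⌈n/k⌉`. -/
theorem stmt11 {n k : ℕ} (hn : 1 ≤ n) (hk : 2 ≤ k)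
    (f : (Fin n → Fin k) → Fin k) :
    dF f ≤ (k - 2) * n + (n + k - 1) / k := by
  have hk0 : 0 < k := by omega
  apply csSup_le
  · exact ⟨0, [], List.isChain_nil, rfl⟩
  · rintro b ⟨C, hC, rfl⟩
    have h1 : k * decC f C ≤ (k - 1) * C.length := by
      rw [decC_eq]
      have := descent_bound k (C.map f)
      rwa [List.length_map] at this
    have h2 : C.length ≤ (k - 1) * n + 1 := chain_length_bound C hC
    have h3 : k * decC f C ≤ (k - 1) * ((k - 1) * n + 1) :=
      h1.trans (Nat.mul_le_mul_left _ h2)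
    have key : (k - 1) * ((k - 1) * n + 1) = k * ((k - 2) * n) + (n + k - 1) := by
      obtain ⟨j, rfl⟩ : ∃ j, k = j + 2 := ⟨k - 2, by omega⟩
      simp only [Nat.add_sub_cancel, show j + 2 - 1 = j + 1 from rfl]
      ring_nf
      omega
    rw [key] at h3
    have : (k - 2) * n + (n + k - 1) / k = (k * ((k - 2) * n) + (n + k - 1)) / k := by
      rw [Nat.mul_add_div hk0]
    rw [this, Nat.le_div_iff_mul_le hk0, mul_comm]
    exact h3
end

section
/- For every n ≥ 1 and k ≥ 2, there exists a function f : E_k^n → E_k with d(f) = (k-2)n + ⌈n/k⌉. -/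
def pairsL {α : Type*} : List α → List (α × α)
  | [] => []
  | [_] => []
  | a :: b :: t => (a, b) :: pairsL (b :: t)

lemma pairsL_eq_zip {α : Type*} (l : List α) : pairsL l = l.zip l.tail := by
  induction l with
  | nil => rfl
  | cons a t ih =>
    cases t with
    | nil => rfl
    | cons b t' => simp [pairsL, ih]

lemma pairsL_length {α : Type*} (l : List α) : (pairsL l).length = l.length - 1 := by
  induction l with
  | nil => rfl
  | cons a t ih =>
    cases t with
    | nil => rfl
    | cons b t' => simp [pairsL] at ih ⊢; omega

lemma pairsL_cons {α : Type*} (a : α) (l : List α) (h : l ≠ []) :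
    pairsL (a :: l) = (a, l.head h) :: pairsL l := by
  cases l with
  | nil => exact absurd rfl h
  | cons b t => rfl

lemma pairsL_map_range {α : Type*} (m : ℕ) (c : ℕ → α) :
    pairsL ((List.range (m+1)).map c) = (List.range m).map (fun j => (c j, c (j+1))) := by
  induction m generalizing c with
  | zero => rfl
  | succ m ih =>
    conv_rhs => rw [List.range_succ_eq_map (n := m), List.map_cons, List.map_map]
    rw [List.range_succ_eq_map (n := m+1), List.map_cons, pairsL_cons _ _ (by simp)]
    simp only [List.map_map]
    rw [ih (c ∘ Nat.succ)]
    congr 1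
    simp [List.range_succ_eq_map (n := m)]

lemma telescope {α : Type*} (v : α → ℤ) (a : α) (t : List α) :
    ((pairsL (a :: t)).map (fun p => v p.2 - v p.1)).sum
      = v ((a :: t).getLast (by simp)) - v a := by
  induction t generalizing a with
  | nil => simp [pairsL]
  | cons b t' ih =>
    rw [pairsL]
    simp only [List.map_cons, List.sum_cons, ih b]
    rw [show (a :: b :: t').getLast (by simp) = (b :: t').getLast (by simp) from
      List.getLast_cons (by simp)]
    ring

lemma sum_bound {β : Type*} (w : β → ℤ) (p : β → Bool) (B c : ℤ) (l : List β)
    (h1 : ∀ x ∈ l, w x ≤ B) (h2 : ∀ x ∈ l, p x → w x ≤ B - c) :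
    (l.map w).sum ≤ B * l.length - c * l.countP p := by
  induction l with
  | nil => simp
  | cons a t ih =>
    simp only [List.map_cons, List.sum_cons, List.length_cons, List.countP_cons]
    have iht := ih (fun x hx => h1 x (List.mem_cons_of_mem _ hx))
      (fun x hx => h2 x (List.mem_cons_of_mem _ hx))
    by_cases hp : p a
    · have := h2 a (List.mem_cons_self) hp
      simp only [hp, if_true]
      push_cast
      nlinarith [iht]
    · have := h1 a (List.mem_cons_self)
      simp only [hp, if_false]
      push_cast
      nlinarith [iht]

lemma count_multiples (k m : ℕ) (hk : 0 < k) :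
    (List.range m).countP (fun j => decide (¬ (j+1) % k = 0)) = m - m / k := by
  induction m with
  | zero => simp
  | succ m ih =>
    rw [List.range_succ, List.countP_append, ih]
    have hs := Nat.succ_div (a := m) (b := k)
    have hmk : m / k ≤ m := Nat.div_le_self m k
    by_cases h : k ∣ (m+1)
    · rw [if_pos h] at hs
      have h0 : (m+1) % k = 0 := Nat.eq_zero_of_dvd_of_lt h |> fun _ => Nat.mod_eq_zero_of_dvd h
      simp only [List.countP_cons, List.countP_nil, h0, decide_eq_true_eq]
      rw [hs]
      simp
    · rw [if_neg h] at hs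
      have h0 : (m+1) % k ≠ 0 := fun hc => h (Nat.dvd_of_mod_eq_zero hc)
      simp only [List.countP_cons, List.countP_nil, h0, decide_eq_true_eq]
      rw [hs]
      simp [h0]
      omega

lemma strict_nat_list_len (l : List ℕ) (B : ℕ) (hl : l.Chain' (· < ·))
    (hB : ∀ x ∈ l, x < B) : l.length ≤ B := by
  have hp : l.Pairwise (· < ·) := List.isChain_iff_pairwise.mp hl
  have hnd : l.Nodup := hp.imp (fun h => ne_of_lt h)
  have : l.toFinset ⊆ Finset.range B := by
    intro x hx
    simp only [Finset.mem_range]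
    exact hB x (List.mem_toFinset.mp hx)
  calc l.length = l.toFinset.card := (List.toFinset_card_of_nodup hnd).symm
    _ ≤ (Finset.range B).card := Finset.card_le_card this
    _ = B := Finset.card_range B
lemma arith_ub {n k D : ℕ} (hk : 2 ≤ k) (h : D * k ≤ (k-1) * (n*(k-1)+1)) :
    D ≤ (k-2)*n + (n+k-1)/k := by
  obtain ⟨a, rfl⟩ : ∃ a, k = a + 2 := ⟨k-2, by omega⟩
  have h1 : (a+2-1) * (n*(a+2-1)+1) = (a+2) * ((a+2-2)*n) + (n + a + 1) := by
    simp only [show a+2-1 = a+1 from rfl, show a+2-2 = a from rfl]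
    ring
  rw [h1] at h
  have h2 : D ≤ ((a+2) * ((a+2-2)*n) + (n + a + 1)) / (a+2) := by
    calc D = D * (a+2) / (a+2) := by rw [Nat.mul_div_cancel _ (by omega)]
    _ ≤ _ := Nat.div_le_div_right h
  rw [Nat.mul_add_div (by omega)] at h2
  have h3 : (n + (a+2) - 1) = n + a + 1 := by omega
  rw [h3]
  exact h2


lemma arith_lb {n k : ℕ} (hn : 1 ≤ n) (hk : 2 ≤ k) :
    n*(k-1) - (n*(k-1))/k = (k-2)*n + (n+k-1)/k := by
  obtain ⟨a, rfl⟩ : ∃ a, k = a + 2 := ⟨k-2, by omega⟩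
  simp only [show a+2-1 = a+1 from rfl, show a+2-2 = a from rfl,
    show n+(a+2)-1 = (n-1)+(a+2) from by omega]
  rw [Nat.add_div_right _ (by omega)]
  obtain ⟨b, r, hbr, hrlt⟩ : ∃ b r, (a+2)*b + r = n-1 ∧ r < a+2 :=
    ⟨(n-1)/(a+2), (n-1)%(a+2), Nat.div_add_mod _ _, Nat.mod_lt _ (by omega)⟩
  have hble : b ≤ n-1 := by
    have := Nat.le_mul_of_pos_left b (show 0 < a+2 by omega)
    omega
  have hdivb : (n-1)/(a+2) = b := by
    rw [← hbr, Nat.mul_add_div (by omega), Nat.div_eq_of_lt hrlt, Nat.add_zero]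
  have key : n*(a+1) = (n-1-b)*(a+2) + (a+1-r) := by
    zify [show b ≤ n-1 from hble, show r ≤ a+1 from by omega, hn]
    have hbr' : ((a:ℤ)+2) * b + r = n - 1 := by
      zify [hn] at hbr; linarith
    linear_combination hbr'
  have hdiv : (n*(a+1))/(a+2) = n-1-b := by
    rw [key, Nat.add_comm, Nat.add_mul_div_right _ _ (show 0 < a+2 by omega),
      Nat.div_eq_of_lt (by omega), Nat.zero_add]
  rw [hdiv, hdivb]
  have e1 : n*(a+1) = n*a + n := by ring
  have e2 : a*n = n*a := by ring
  rw [e1, e2]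
  omega

lemma divmod_unique {n d r x : ℕ} (h : n*d + r = x) (hr : r < n) :
    x/n = d ∧ x%n = r := by
  constructor
  · rw [← h, Nat.mul_add_div (by omega), Nat.div_eq_of_lt hr, Nat.add_zero]
  · rw [← h, Nat.mul_add_mod, Nat.mod_eq_of_lt hr]

lemma sum_ite_lt (n r : ℕ) (hr : r ≤ n) :
    (∑ i : Fin n, (if (i : ℕ) < r then 1 else 0)) = r := by
  rw [Fin.sum_univ_eq_sum_range (fun i => if i < r then 1 else 0) n]
  have key : ∀ m : ℕ, (∑ i ∈ Finset.range m, (if i < r then 1 else 0)) = min r m := by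
    intro m
    induction m with
    | zero => simp
    | succ m ih =>
      rw [Finset.sum_range_succ, ih]
      split_ifs <;> omega
  rw [key n]; omega

def cD (n k : ℕ) (hk : 2 ≤ k) (j : ℕ) : Fin n → Fin k :=
  fun i => ⟨min (k-1) (j / n + if (i:ℕ) < j % n then 1 else 0), by omega⟩

lemma cD_val {n k : ℕ} (hk : 2 ≤ k) (hn : 1 ≤ n) {j : ℕ} (hj : j ≤ n*(k-1)) (i : Fin n) :
    (cD n k hk j i : ℕ) = j / n + if (i:ℕ) < j % n then 1 else 0 := by
  show min (k-1) _ = _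
  rcases eq_or_lt_of_le hj with he | hlt
  · obtain ⟨hd, hr⟩ := divmod_unique (n := n) (d := k-1) (r := 0) (x := j)
      (by omega) (by omega)
    rw [hd, hr]
    simp
  · have hd : j / n < k - 1 := by
      rw [Nat.div_lt_iff_lt_mul (by omega)]
      calc j < n*(k-1) := hlt
      _ = (k-1)*n := by ring
    split_ifs <;> omega

lemma cD_sum {n k : ℕ} (hk : 2 ≤ k) (hn : 1 ≤ n) {j : ℕ} (hj : j ≤ n*(k-1)) :
    (∑ i, (cD n k hk j i : ℕ)) = j := by
  have hrn : j % n < n := Nat.mod_lt _ (by omega)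
  calc (∑ i, (cD n k hk j i : ℕ))
      = ∑ i : Fin n, (j / n + if (i:ℕ) < j % n then 1 else 0) := by
        apply Finset.sum_congr rfl
        intro i _
        exact cD_val hk hn hj i
    _ = (∑ _i : Fin n, j / n) + ∑ i : Fin n, (if (i:ℕ) < j % n then 1 else 0) :=
        Finset.sum_add_distrib
    _ = n * (j / n) + j % n := by
        rw [Finset.sum_const, Finset.card_univ, Fintype.card_fin, smul_eq_mul,
          sum_ite_lt n (j % n) (by omega)]
    _ = j := Nat.div_add_mod j n

lemma step_vals {n : ℕ} (hn : 1 ≤ n) (j : ℕ) (i : ℕ) (hi : i < n) :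
    (j+1)/n + (if i < (j+1) % n then 1 else 0)
      = j/n + (if i < j % n then 1 else 0) + (if i = j % n then 1 else 0) := by
  have hdm : n*(j/n) + j%n = j := Nat.div_add_mod j n
  have hrn : j%n < n := Nat.mod_lt _ (by omega)
  by_cases hc : j%n + 1 < n
  · obtain ⟨hd, hr⟩ := divmod_unique (n := n) (d := j/n) (r := j%n+1) (x := j+1)
      (by omega) hc
    rw [hd, hr]; split_ifs <;> omega
  · obtain ⟨hd, hr⟩ := divmod_unique (n := n) (d := j/n+1) (r := 0) (x := j+1)
      (by have h2 : n*(j/n+1) = n*(j/n) + n := by ring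
          omega) (by omega)
    rw [hd, hr]; split_ifs <;> omega

lemma cD_lt {n k : ℕ} (hk : 2 ≤ k) (hn : 1 ≤ n) {j : ℕ} (hj : j + 1 ≤ n*(k-1)) :
    cD n k hk j < cD n k hk (j+1) := by
  rw [Pi.lt_def]
  constructor
  · intro i
    rw [Fin.le_def, cD_val hk hn (by omega) i, cD_val hk hn hj i,
      step_vals hn j (i:ℕ) i.isLt]
    split_ifs <;> omega
  · refine ⟨⟨j % n, Nat.mod_lt _ (by omega)⟩, ?_⟩
    rw [Fin.lt_def, cD_val hk hn (by omega) _, cD_val hk hn hj _,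
      step_vals hn j _ (Nat.mod_lt _ (by omega))]
    split_ifs <;> omega


def fD (n k : ℕ) (hk : 2 ≤ k) : (Fin n → Fin k) → Fin k :=
  fun x => ⟨k - 1 - (∑ i, (x i : ℕ)) % k, by omega⟩

/-- For `n ≥ 1`, `k ≥ 2`, there exists `f : E_k^n → E_k` with
    `d(f) = (k-2)n + ⌈n/k⌉`. -/
theorem stmt12 {n k : ℕ} (hn : 1 ≤ n) (hk : 2 ≤ k) :
    ∃ f : (Fin n → Fin k) → Fin k, dF f = (k - 2) * n + (n + k - 1) / k := by
  refine ⟨fD n k hk, ?_⟩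
  set f := fD n k hk with hfdef
  set T := (k - 2) * n + (n + k - 1) / k with hT
  -- upper bound for any chain
  have hub : ∀ C : List (Fin n → Fin k), IsChainE C → decC f C ≤ T := by
    intro C hC
    cases C with
    | nil => simp [decC]
    | cons a t =>
      -- length bound
      have hlen : (a :: t).length ≤ n*(k-1)+1 := by
        have hmono : ∀ x y : Fin n → Fin k, x < y →
            (∑ i, (x i : ℕ)) < ∑ i, (y i : ℕ) := by
          intro x y hxy
          obtain ⟨hle, i, hi⟩ := Pi.lt_def.mp hxy
          exact Finset.sum_lt_sum (fun i _ => hle i) ⟨i, Finset.mem_univ i, hi⟩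
        have hchain : ((a :: t).map (fun x => ∑ i, (x i : ℕ))).Chain' (· < ·) :=
          (List.isChain_map _).mpr (hC.imp (fun {x y} => hmono x y))
        have hb : ∀ v ∈ (a :: t).map (fun x => ∑ i, (x i : ℕ)), v < n*(k-1)+1 := by
          intro v hv
          obtain ⟨x, _, rfl⟩ := List.mem_map.mp hv
          have h1 : (∑ i, (x i : ℕ)) ≤ ∑ _i : Fin n, (k-1) :=
            Finset.sum_le_sum (fun i _ => by have := (x i).isLt; omega)
          rw [Finset.sum_const, Finset.card_univ, Fintype.card_fin, smul_eq_mul] at h1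
          omega
        have := strict_nat_list_len _ _ hchain hb
        simpa using this
      -- integer counting
      set v : (Fin n → Fin k) → ℤ := fun x => ((f x : ℕ) : ℤ) with hv
      have hvb : ∀ x : Fin n → Fin k, 0 ≤ v x ∧ v x ≤ (k:ℤ) - 1 := by
        intro x
        constructor
        · exact Int.natCast_nonneg _
        · show ((f x : ℕ) : ℤ) ≤ (k:ℤ) - 1
          have h1 : ((f x : ℕ) : ℤ) < (k : ℤ) := by exact_mod_cast (f x).isLt
          omega
      have htel := telescope v a t
      have hsum := sum_bound (fun p => v p.2 - v p.1)
          (fun p => decide (f p.2 < f p.1)) ((k:ℤ)-1) (k:ℤ) (pairsL (a :: t))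
          (by intro p _
              show v p.2 - v p.1 ≤ (k:ℤ) - 1
              have h1 := (hvb p.1).1
              have h2 := (hvb p.2).2
              omega)
          (by intro p _ hp
              have hlt : (f p.2 : ℕ) < (f p.1 : ℕ) := of_decide_eq_true hp
              have : ((f p.2 : ℕ) : ℤ) < ((f p.1 : ℕ) : ℤ) := by exact_mod_cast hlt
              show v p.2 - v p.1 ≤ (k:ℤ) - 1 - (k:ℤ)
              have h1 : v p.2 = ((f p.2 : ℕ) : ℤ) := rfl
              have h2 : v p.1 = ((f p.1 : ℕ) : ℤ) := rfl
              omega)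
      have hlow : -((k:ℤ)-1) ≤ v ((a :: t).getLast (by simp)) - v a := by
        have h1 := (hvb ((a :: t).getLast (by simp))).1
        have h2 := (hvb a).2
        omega
      rw [htel] at hsum
      -- decC as countP over pairsL
      have hdc : decC f (a :: t) = (pairsL (a :: t)).countP
          (fun p => decide (f p.2 < f p.1)) := by
        rw [decC, pairsL_eq_zip]
      have hplen : ((pairsL (a :: t)).length : ℤ) = ((a :: t).length : ℤ) - 1 := by
        rw [pairsL_length]
        simp
      set D := (pairsL (a :: t)).countP (fun p => decide (f p.2 < f p.1)) with hD
      have hkD : (D : ℤ) * k ≤ ((k:ℤ)-1) * ((a :: t).length) := by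
        nlinarith [hsum, hlow, hplen]
      have hlen' : ((a :: t).length : ℤ) ≤ ((n*(k-1)+1 : ℕ) : ℤ) := by
        exact_mod_cast hlen
      have hnat : D * k ≤ (k-1) * (n*(k-1)+1) := by
        have hk1 : (0:ℤ) ≤ (k:ℤ) - 1 := by omega
        have h2 : (D : ℤ) * k ≤ ((k:ℤ)-1) * ((n*(k-1)+1 : ℕ) : ℤ) := by
          nlinarith
        have e : ((k:ℤ) - 1) = ((k-1 : ℕ) : ℤ) := by omega
        rw [e] at h2
        exact_mod_cast h2
      rw [hdc]
      exact arith_ub hk hnat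
  -- the optimal chain
  set m := n*(k-1) with hm
  set c := cD n k hk with hc
  set C0 := (List.range (m+1)).map c with hC0
  have hchain0 : IsChainE C0 := by
    rw [IsChainE, hC0]
    apply (List.isChain_map _).mpr
    rw [show m + 1 = Nat.succ m from rfl, List.isChain_range_succ]
    intro j hj
    exact cD_lt hk hn (by omega)
  have hdec0 : decC f C0 = T := by
    rw [decC, ← pairsL_eq_zip, hC0, pairsL_map_range, List.countP_map]
    have hcongr : ∀ j ∈ List.range m,
        ((fun p : _ × _ => decide (f p.2 < f p.1)) ∘ (fun j => (c j, c (j+1)))) j = true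
          ↔ (fun j : ℕ => decide (¬ (j+1) % k = 0)) j = true := by
      intro j hj
      have hjm : j < m := List.mem_range.mp hj
      simp only [Function.comp_apply, decide_eq_true_eq]
      have hs1 : (∑ i, ((c j) i : ℕ)) = j := cD_sum hk hn (by omega)
      have hs2 : (∑ i, ((c (j+1)) i : ℕ)) = j + 1 := cD_sum hk hn (by omega)
      rw [Fin.lt_def]
      show (k - 1 - (∑ i, ((c (j+1)) i : ℕ)) % k < k - 1 - (∑ i, ((c j) i : ℕ)) % k)
        ↔ ¬ (j+1) % k = 0
      rw [hs1, hs2]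
      have h1 : (j+1) % k = (j % k + 1 % k) % k := Nat.add_mod j 1 k
      rw [Nat.mod_eq_of_lt (show 1 < k by omega)] at h1
      have h2 : j % k < k := Nat.mod_lt _ (by omega)
      by_cases hc2 : j % k + 1 = k
      · rw [h1, hc2, Nat.mod_self]
        omega
      · rw [h1, Nat.mod_eq_of_lt (by omega)]
        omega
    rw [List.countP_congr hcongr, count_multiples k m (by omega)]
    rw [hm, hT]
    exact arith_lb hn hk
  -- conclude
  rw [dF]
  have hset : T ∈ {mm : ℕ | ∃ C : List (Fin n → Fin k), IsChainE C ∧ decC f C = mm} :=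
    ⟨C0, hchain0, hdec0⟩
  have hbdd : ∀ x ∈ {mm : ℕ | ∃ C : List (Fin n → Fin k), IsChainE C ∧ decC f C = mm},
      x ≤ T := by
    rintro x ⟨C, hC, rfl⟩
    exact hub C hC
  exact le_antisymm (csSup_le ⟨T, hset⟩ hbdd)
    (le_csSup ⟨T, fun a ha => hbdd a ha⟩ hset)
end

section
/- For every n ≥ 1, every Boolean function f : {0,1}^n → {0,1} satisfies d(f) ≤ ⌈n/2⌉, and there exists a Boolean function of n variables attaining d(f) = ⌈n/2⌉. -/
lemma decC_cons {n : ℕ} (f : (Fin n → Fin 2) → Fin 2) (a b : Fin n → Fin 2)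
    (t : List (Fin n → Fin 2)) :
    decC f (a :: b :: t) = (if f b < f a then 1 else 0) + decC f (b :: t) := by
  by_cases h : f b < f a <;> simp [decC, List.countP_cons, h, Nat.add_comm]

lemma decC_le {n : ℕ} (f : (Fin n → Fin 2) → Fin 2) :
    ∀ C : List (Fin n → Fin 2), decC f C ≤ C.length / 2
  | [] => by simp [decC]
  | [a] => by simp [decC]
  | a :: b :: t => by
    rw [decC_cons]
    by_cases h : f b < f a
    · have hb : f b = 0 := by
        have h1 := (f a).isLt
        have h2 : (f b).val < (f a).val := h
        exact Fin.ext (by omega)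
      have h2 : decC f (b :: t) = decC f t := by
        cases t with
        | nil => simp [decC]
        | cons c t' =>
          rw [decC_cons]
          have hcb : ¬ f c < f b := by rw [hb]; exact Fin.not_lt_zero _
          simp [hcb]
      have := decC_le f t
      simp only [h, if_true, h2, List.length_cons]
      omega
    · have := decC_le f (b :: t)
      simp only [h, if_false, List.length_cons] at *
      omega

lemma weight_lt {n : ℕ} {a b : Fin n → Fin 2} (hab : a < b) :
    (∑ i, (a i).val) < ∑ i, (b i).val := by
  rw [Pi.lt_def] at hab
  obtain ⟨hle, i, hi⟩ := hab
  exact Finset.sum_lt_sum (fun j _ => hle j) ⟨i, Finset.mem_univ i, hi⟩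

lemma chain_len {n : ℕ} (C : List (Fin n → Fin 2)) (h : IsChainE C) :
    C.length ≤ n + 1 := by
  set w : (Fin n → Fin 2) → ℕ := fun x => ∑ i, (x i).val with hw
  have hL : (C.map w).Chain' (· < ·) := by
    rw [List.Chain', List.isChain_map]
    exact h.imp (fun a b hab => weight_lt hab)
  have hpw : (C.map w).Pairwise (· < ·) := List.isChain_iff_pairwise.mp hL
  have hnd : (C.map w).Nodup := hpw.imp Nat.ne_of_lt
  have hsub : (C.map w).toFinset ⊆ Finset.range (n + 1) := by
    intro x hx
    rw [List.mem_toFinset] at hx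
    obtain ⟨a, _, rfl⟩ := List.mem_map.mp hx
    rw [Finset.mem_range]
    have : w a ≤ ∑ _i : Fin n, 1 := Finset.sum_le_sum (fun i _ => by omega)
    simpa using Nat.lt_succ_of_le (by simpa using this)
  have := Finset.card_le_card hsub
  rw [List.toFinset_card_of_nodup hnd, Finset.card_range, List.length_map] at this
  exact this

lemma decC_map_range' {n : ℕ} (f : (Fin n → Fin 2) → Fin 2) (g : ℕ → (Fin n → Fin 2)) :
    ∀ m s, decC f (List.map g (List.range' s (m + 1))) =
      (List.range' s m).countP (fun j => decide (f (g (j + 1)) < f (g j)))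
  | 0, s => by simp [decC]
  | m + 1, s => by
    rw [List.range'_succ (s := s) (n := m + 1) (step := 1), List.map_cons,
      List.range'_succ (s := s + 1) (n := m) (step := 1), List.map_cons, decC_cons,
      ← List.map_cons (f := g), ← List.range'_succ (s := s + 1) (n := m) (step := 1),
      decC_map_range' f g m (s + 1), List.range'_succ (s := s) (n := m) (step := 1), List.countP_cons]
    by_cases h : f (g (s + 1)) < f (g s) <;> simp [h, Nat.add_comm]

lemma count_even : ∀ m s, (List.range' s m).countP (fun j => decide (j % 2 = 0))
    = (m + (1 - s % 2)) / 2
  | 0, s => by simp; omega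
  | m + 1, s => by
    rw [List.range'_succ, List.countP_cons, count_even m (s + 1)]
    by_cases h : s % 2 = 0 <;> simp [h] <;> omega

/-- For `n ≥ 1`, every Boolean function satisfies `d(f) ≤ ⌈n/2⌉`, and some
    Boolean function of `n` variables attains this bound. -/
theorem stmt13 {n : ℕ} (hn : 1 ≤ n) :
    (∀ f : (Fin n → Fin 2) → Fin 2, dF f ≤ (n + 1) / 2) ∧
    (∃ f : (Fin n → Fin 2) → Fin 2, dF f = (n + 1) / 2) := by
  have hub : ∀ f : (Fin n → Fin 2) → Fin 2, ∀ m ∈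
      {m : ℕ | ∃ C : List (Fin n → Fin 2), IsChainE C ∧ decC f C = m}, m ≤ (n + 1) / 2 := by
    rintro f m ⟨C, hC, rfl⟩
    calc decC f C ≤ C.length / 2 := decC_le f C
      _ ≤ (n + 1) / 2 := Nat.div_le_div_right (chain_len C hC)
  have hne : ∀ f : (Fin n → Fin 2) → Fin 2,
      {m : ℕ | ∃ C : List (Fin n → Fin 2), IsChainE C ∧ decC f C = m}.Nonempty := by
    intro f
    exact ⟨decC f [], [], List.isChain_nil, rfl⟩
  constructor
  · intro f
    exact csSup_le (hne f) (hub f)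
  · -- the parity function
    set f : (Fin n → Fin 2) → Fin 2 :=
      fun x => if (∑ i, (x i).val) % 2 = 0 then 1 else 0 with hf
    set g : ℕ → (Fin n → Fin 2) := fun j i => if i.val < j then 1 else 0 with hg
    have hwg : ∀ j ≤ n, (∑ i, ((g j) i).val) = j := by
      intro j hj
      have : (∑ i : Fin n, ((g j) i).val) = ∑ i : Fin n, (if i.val < j then 1 else 0) := by
        apply Finset.sum_congr rfl
        intro i _
        by_cases h : i.val < j <;> simp [hg, h]
      rw [this, Fin.sum_univ_eq_sum_range (fun k => if k < j then 1 else 0)]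
      rw [Finset.sum_boole]
      have : (Finset.range n).filter (fun k => k < j) = Finset.range j := by
        ext k; simp; omega
      simp [this]
    have hfg : ∀ j ≤ n, f (g j) = if j % 2 = 0 then 1 else 0 := by
      intro j hj
      rw [hf]; simp only [hwg j hj]
    have hchain : IsChainE (List.map g (List.range (n + 1))) := by
      unfold IsChainE
      rw [List.Chain', List.isChain_map]
      rw [show n + 1 = (n : ℕ).succ from rfl, List.isChain_range_succ]
      intro m hm
      have hle : g m ≤ g (m + 1) := by
        intro i
        by_cases h : i.val < m
        · simp [hg, h, Nat.lt_succ_of_lt h]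
        · by_cases h2 : i.val < m + 1 <;> simp [hg, h, h2] <;> exact Fin.zero_le _
      have hne2 : g m ≠ g (m + 1) := by
        intro heq
        have := congrFun heq ⟨m, hm⟩
        simp [hg] at this
      exact lt_of_le_of_ne hle hne2
    have hdec : decC f (List.map g (List.range (n + 1))) = (n + 1) / 2 := by
      rw [List.range_eq_range', decC_map_range' f g n 0]
      have : (List.range' 0 n).countP (fun j => decide (f (g (j + 1)) < f (g j)))
          = (List.range' 0 n).countP (fun j => decide (j % 2 = 0)) := by
        apply List.countP_congr
        intro j hj
        have hjn : j < n := by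
          have := List.mem_range'_1.mp hj; omega
        rw [hfg j (le_of_lt hjn), hfg (j + 1) hjn]
        by_cases h : j % 2 = 0
        · have : (j + 1) % 2 ≠ 0 := by omega
          simp [h, this]
        · have : (j + 1) % 2 = 0 := by omega
          simp [h, this]
      rw [this, count_even n 0]
    refine ⟨f, le_antisymm (csSup_le (hne f) (hub f)) ?_⟩
    apply le_csSup
    · exact ⟨(n + 1) / 2, hub f⟩
    · exact ⟨_, hchain, hdec⟩
end

section
/- Let T_1, ..., T_s be defined from a system F as in the layered decomposition (T_i collects tuples all of whose chains within the remaining set have small decrease). Then the sets T_1, ..., T_s partition E_k^n and are downward-consistent: if α ∈ T_i and β < α coordinatewise (β ≠ α), then β ∈ T_1 ∪ ... ∪ T_i. In particular, each indicator function μ_i(x) = 0 for x ∈ T_1 ∪ ... ∪ T_{i-1} and μ_i(x) = 1 for x ∈ T_i ∪ ... ∪ T_s is monotone. -/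
/-- Decrease of a system `F` over a chain: number of consecutive pairs that are
    jumps for every function of `F`. -/
def decCS {n k : ℕ} (F : Finset ((Fin n → Fin k) → Fin k)) (C : List (Fin n → Fin k)) : ℕ :=
  (C.zip C.tail).countP (fun p => decide (∀ f ∈ F, f p.2 < f p.1))

/-- Decrease `d(F)` of a system of functions. -/
noncomputable def dSysF {n k : ℕ} (F : Finset ((Fin n → Fin k) → Fin k)) : ℕ :=
  sSup {m : ℕ | ∃ C : List (Fin n → Fin k), IsChainE C ∧ decCS F C = m}

lemma countP_zip_tail_concat {X : Type*} (p : X × X → Bool) :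
    ∀ (l : List X) (a : X),
      (l.zip l.tail).countP p ≤ (((l ++ [a]).zip (l ++ [a]).tail)).countP p := by
  intro l
  induction l with
  | nil => simp
  | cons x xs ih =>
    intro a
    cases xs with
    | nil => simp
    | cons y ys =>
      have h := ih a
      simp only [List.cons_append, List.tail_cons, List.zip_cons_cons,
        List.countP_cons] at *
      omega

lemma decCS_concat_le {n k : ℕ} (F : Finset ((Fin n → Fin k) → Fin k))
    (C : List (Fin n → Fin k)) (a : Fin n → Fin k) :
    decCS F C ≤ decCS F (C ++ [a]) :=
  countP_zip_tail_concat _ C a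

/-- The layers `T 0, ..., T (s-1)` (representing `T_1, ..., T_s`) partition
    `E_k^n` and are downward-consistent: if `α ∈ T i` and `β ≤ α`, `β ≠ α`,
    then `β ∈ T 0 ∪ ... ∪ T i`.  In particular each 0/1-valued indicator
    `μ_i` (value `0` on `T 0 ∪ ... ∪ T (i-1)`, value `1` on
    `T i ∪ ... ∪ T (s-1)`) is monotone. -/
theorem stmt17 {n k s t : ℕ} (hk : 2 ≤ k) (hs : 2 ≤ s) (ht : 1 ≤ t)
    (F : Finset ((Fin n → Fin k) → Fin k))
    (T : ℕ → Set (Fin n → Fin k))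
    (hT : ∀ i < s - 1, ∀ α, α ∈ T i ↔
      ((∀ j < i, α ∉ T j) ∧
       ∀ C : List (Fin n → Fin k), IsChainE C → (∀ β ∈ C, ∀ j < i, β ∉ T j) →
         C.getLast? = some α → decCS F C < t))
    (hTs : ∀ α, α ∈ T (s - 1) ↔ ∀ j < s - 1, α ∉ T j) :
    (∀ α : Fin n → Fin k, ∃! i, i < s ∧ α ∈ T i) ∧
    (∀ i < s, ∀ α ∈ T i, ∀ β : Fin n → Fin k, β ≤ α → β ≠ α → ∃ j ≤ i, β ∈ T j) ∧
    (∀ i < s, ∀ μ : (Fin n → Fin k) → Fin k,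
      (∀ x, (∃ j < i, x ∈ T j) → (μ x).val = 0) →
      (∀ x, ¬ (∃ j < i, x ∈ T j) → (μ x).val = 1) →
      Monotone μ) := by
  have hnot : ∀ i < s, ∀ α ∈ T i, ∀ j < i, α ∉ T j := by
    intro i hi α hα j hj
    rcases lt_or_eq_of_le (Nat.le_sub_one_of_lt hi) with hlt | heq
    · exact ((hT i hlt α).1 hα).1 j hj
    · exact (hTs α).1 (heq ▸ hα) j (heq ▸ hj)
  have hpart : ∀ α, ∃ i < s, α ∈ T i := by
    intro α
    by_cases h : ∃ j < s - 1, α ∈ T j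
    · obtain ⟨j, hj, hmem⟩ := h
      exact ⟨j, lt_of_lt_of_le hj (Nat.sub_le s 1), hmem⟩
    · push_neg at h
      exact ⟨s - 1, Nat.sub_lt (by omega) one_pos, (hTs α).2 h⟩
  have huniq : ∀ (α : Fin n → Fin k), ∀ i < s, ∀ i' < s,
      α ∈ T i → α ∈ T i' → i = i' := by
    intro α i hi i' hi' h h'
    rcases lt_trichotomy i i' with hlt | heq | hlt
    · exact absurd h (hnot i' hi' α h' i hlt)
    · exact heq
    · exact absurd h' (hnot i hi α h i' hlt)
  have hdown : ∀ i < s, ∀ α ∈ T i, ∀ β : Fin n → Fin k,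
      β ≤ α → β ≠ α → ∃ j ≤ i, β ∈ T j := by
    intro i hi α hα β hle hne
    rcases lt_or_eq_of_le (Nat.le_sub_one_of_lt hi) with hlt | heq
    · by_contra hcon
      push_neg at hcon
      have hβnot : ∀ j < i, β ∉ T j := fun j hj => hcon j (le_of_lt hj)
      have hβni : β ∉ T i := hcon i le_rfl
      rw [hT i hlt β] at hβni
      push_neg at hβni
      obtain ⟨C, hC, havoid, hlast, hdec⟩ := hβni hβnot
      have hαnot : ∀ j < i, α ∉ T j := ((hT i hlt α).1 hα).1
      have hβα : β < α := lt_of_le_of_ne hle hne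
      have hC' : IsChainE (C ++ [α]) := by
        rw [IsChainE, List.Chain', List.isChain_append]
        refine ⟨hC, List.isChain_singleton _, ?_⟩
        intro x hx y hy
        simp only [List.head?_cons, Option.mem_some_iff] at hy
        rw [hlast] at hx
        simp only [Option.mem_some_iff] at hx
        subst hx; subst hy; exact hβα
      have hlast' : (C ++ [α]).getLast? = some α := by
        simp [List.getLast?_append]
      have havoid' : ∀ γ ∈ C ++ [α], ∀ j < i, γ ∉ T j := by
        intro γ hγ
        rcases List.mem_append.1 hγ with h1 | h1
        · exact havoid γ h1
        · simp only [List.mem_singleton] at h1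
          subst h1
          exact hαnot
      have hsmall := ((hT i hlt α).1 hα).2 (C ++ [α]) hC' havoid' hlast'
      have hle' := decCS_concat_le F C α
      omega
    · obtain ⟨j, hj, hmem⟩ := hpart β
      exact ⟨j, by omega, hmem⟩
  refine ⟨?_, hdown, ?_⟩
  · intro α
    obtain ⟨i, hi, hmem⟩ := hpart α
    exact ⟨i, ⟨hi, hmem⟩, fun i' ⟨hi', hmem'⟩ => huniq α i' hi' i hi hmem' hmem⟩
  · intro i hi μ h0 h1 x y hxy
    rcases eq_or_ne x y with rfl | hne
    · exact le_refl _
    · have hval : (μ x).val ≤ (μ y).val := by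
        by_cases hy : ∃ j < i, y ∈ T j
        · obtain ⟨j, hj, hmem⟩ := hy
          obtain ⟨j', hj', hx⟩ := hdown j (by omega) y hmem x hxy hne
          rw [h0 y ⟨j, hj, hmem⟩, h0 x ⟨j', by omega, hx⟩]
        · rw [h1 y hy]
          by_cases hx : ∃ j < i, x ∈ T j
          · rw [h0 x hx]; omega
          · rw [h1 x hx]
      exact hval
end

section
/- For k ≥ 2 and any function f : E_k^n → E_k, define f_i (for 1 ≤ i ≤ s) by f_i(x) = 0 if x ∈ T_1 ∪ ... ∪ T_{i-1}, f_i(x) = f(x) if x ∈ T_i, and f_i(x) = k-1 if x ∈ T_{i+1} ∪ ... ∪ T_s, where T_1, ..., T_s is a partition of E_k^n that is downward-closed in cumulative unions (i.e., each T_1 ∪ ... ∪ T_i is a down-set) and such that every chain contained in a single T_i has d_C(f) < t. Then d(f_i) ≤ t - 1 for every i. -/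
/-- If `T 0, ..., T (s-1)` partition `E_k^n` with each cumulative union
    `T 0 ∪ ... ∪ T i` a down-set, and every chain inside a single layer has
    decrease of `f` less than `t`, then each modified function `fᵢ`
    (equal to `0` below layer `i`, to `f` on layer `i`, and to `k-1` above)
    satisfies `d(fᵢ) ≤ t - 1`. -/
theorem stmt18 {n k s t : ℕ} (hk : 2 ≤ k) (hs : 1 ≤ s) (ht : 1 ≤ t)
    (f : (Fin n → Fin k) → Fin k)
    (T : ℕ → Set (Fin n → Fin k))
    (hpart : ∀ x : Fin n → Fin k, ∃! i, i < s ∧ x ∈ T i)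
    (hdown : ∀ i < s, ∀ α β : Fin n → Fin k, β ≤ α →
      (∃ j ≤ i, α ∈ T j) → ∃ j ≤ i, β ∈ T j)
    (hchain : ∀ i < s, ∀ C : List (Fin n → Fin k), IsChainE C →
      (∀ β ∈ C, β ∈ T i) → decC f C < t)
    (fi : ℕ → (Fin n → Fin k) → Fin k)
    (hfi : ∀ i < s, ∀ x : Fin n → Fin k,
      ((∃ j < i, x ∈ T j) → (fi i x).val = 0) ∧
      (x ∈ T i → fi i x = f x) ∧
      ((∃ j, i < j ∧ j < s ∧ x ∈ T j) → (fi i x).val = k - 1)) :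
    ∀ i < s, dF (fi i) ≤ t - 1 := by
  classical
  intro i hi
  -- uniqueness of layers
  have uniq : ∀ x : Fin n → Fin k, ∀ j1 j2, j1 < s → j2 < s → x ∈ T j1 → x ∈ T j2 → j1 = j2 := by
    intro x j1 j2 h1 h2 hx1 hx2
    obtain ⟨j, -, hj⟩ := hpart x
    have e1 := hj j1 ⟨h1, hx1⟩
    have e2 := hj j2 ⟨h2, hx2⟩
    exact e1.trans e2.symm
  -- trichotomy
  have tri : ∀ x : Fin n → Fin k, (∃ j < i, x ∈ T j) ∨ x ∈ T i ∨ (∃ j, i < j ∧ j < s ∧ x ∈ T j) := by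
    intro x
    obtain ⟨j, ⟨hjs, hxj⟩, -⟩ := hpart x
    rcases lt_trichotomy j i with h | h | h
    · exact Or.inl ⟨j, h, hxj⟩
    · exact Or.inr (Or.inl (h ▸ hxj))
    · exact Or.inr (Or.inr ⟨j, h, hjs, hxj⟩)
  -- key: any descent of fi i happens between two mid elements
  have key : ∀ x y : Fin n → Fin k, x < y → fi i y < fi i x →
      x ∈ T i ∧ y ∈ T i ∧ f y < f x := by
    intro x y hxy hdesc
    have hval : (fi i y).val < (fi i x).val := hdesc
    rcases tri x with hx | hx | hx
    · -- x low: fi i x = 0, impossible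
      have := (hfi i hi x).1 hx
      omega
    · -- x mid
      rcases tri y with hy | hy | hy
      · -- y low: impossible by down-set
        obtain ⟨j, hji, hyj⟩ := hy
        have hi1 : i - 1 < s := by omega
        obtain ⟨j', hj', hxj'⟩ := hdown (i - 1) hi1 y x (le_of_lt hxy) ⟨j, by omega, hyj⟩
        have : j' = i := uniq x j' i (by omega) hi hxj' hx
        omega
      · -- y mid
        have ex := (hfi i hi x).2.1 hx
        have ey := (hfi i hi y).2.1 hy
        exact ⟨hx, hy, by rw [ex, ey] at hdesc; exact hdesc⟩
      · -- y high: fi i y = k - 1 ≥ fi i x, impossible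
        have := (hfi i hi y).2.2 hy
        have hlt := (fi i x).isLt
        omega
    · -- x high: then y is high too, both values k - 1
      obtain ⟨j, hij, hjs', hxj⟩ := hx
      have hyhigh : ∃ j', i < j' ∧ j' < s ∧ y ∈ T j' := by
        rcases tri y with hy | hy | hy
        · obtain ⟨j', hj'i, hyj'⟩ := hy
          obtain ⟨j'', hj'', hxj''⟩ := hdown i hi y x (le_of_lt hxy) ⟨j', by omega, hyj'⟩
          have : j'' = j := uniq x j'' j (by omega) hjs' hxj'' hxj
          omega
        · obtain ⟨j'', hj'', hxj''⟩ := hdown i hi y x (le_of_lt hxy) ⟨i, le_refl i, hy⟩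
          have : j'' = j := uniq x j'' j (by omega) hjs' hxj'' hxj
          omega
        · exact hy
      have hx1 := (hfi i hi x).2.2 ⟨j, hij, hjs', hxj⟩
      have hy1 := (hfi i hi y).2.2 hyhigh
      omega
  -- basic decC lemmas
  have decC_cons2 : ∀ (g : (Fin n → Fin k) → Fin k) x y (L : List (Fin n → Fin k)),
      decC g (x :: y :: L) = decC g (y :: L) + (if g y < g x then 1 else 0) := by
    intro g x y L
    simp [decC, List.countP_cons]
  have decC_le_cons : ∀ (g : (Fin n → Fin k) → Fin k) x (L : List (Fin n → Fin k)),
      decC g L ≤ decC g (x :: L) := by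
    intro g x L
    cases L with
    | nil => simp [decC]
    | cons a L' => rw [decC_cons2]; omega
  set p : (Fin n → Fin k) → Bool := fun x => decide (x ∈ T i) with hp
  -- main induction
  have main : ∀ C : List (Fin n → Fin k), C.Chain' (· < ·) →
      decC (fi i) C ≤ decC f (C.filter p) := by
    intro C
    induction C with
    | nil => intro _; simp [decC]
    | cons x rest ih =>
      intro hC
      cases rest with
      | nil => simp [decC]
      | cons y L =>
        have hxy : x < y := (List.isChain_cons_cons.mp hC).1
        have htail : (y :: L).Chain' (· < ·) := (List.isChain_cons_cons.mp hC).2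
        have IH := ih htail
        rw [decC_cons2]
        by_cases hdesc : fi i y < fi i x
        · obtain ⟨hxm, hym, hf⟩ := key x y hxy hdesc
          have hpx : p x = true := by simp [hp, hxm]
          have hpy : p y = true := by simp [hp, hym]
          rw [List.filter_cons_of_pos hpx]
          have hfy : (y :: L).filter p = y :: L.filter p := List.filter_cons_of_pos hpy
          rw [hfy] at IH ⊢
          rw [decC_cons2 f x y]
          simp only [if_pos hdesc, if_pos hf]
          omega
        · simp only [if_neg hdesc]
          have hle : decC f ((y :: L).filter p) ≤ decC f ((x :: y :: L).filter p) := by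
            rw [show (x :: y :: L).filter p
                = if p x then x :: (y :: L).filter p else (y :: L).filter p
                from List.filter_cons]
            split
            · exact decC_le_cons f x _
            · exact le_refl _
          omega
  -- conclude
  have bound : ∀ C : List (Fin n → Fin k), IsChainE C → decC (fi i) C ≤ t - 1 := by
    intro C hC
    have h1 := main C hC
    have hsub : (C.filter p).Chain' (· < ·) := hC.sublist (List.filter_sublist (l := C))
    have hmem : ∀ β ∈ C.filter p, β ∈ T i := by
      intro β hβ
      have := (List.mem_filter.mp hβ).2
      simpa [hp] using this
    have h2 := hchain i hi (C.filter p) hsub hmem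
    omega
  apply csSup_le
  · exact ⟨0, [], by constructor, by simp [decC]⟩
  · rintro m ⟨C, hC, rfl⟩
    exact bound C hC
end
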